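/- For f = 0, q = 1, and γ¹(t,x) = A sin(2πκx¹/L) cos(2πκx²/L) e^{-σ²(2πκ/L)² t}, γ²(t,x) = -A cos(2πκx¹/L) sin(2πκx²/L) e^{-σ²(2πκ/L)² t}, the pair v(t,x) = γ(t,x) w(t), p(t,x) = (A²/4)(cos(4πκx¹/L) + cos(4πκx²/L)) e^{-2σ²(2πκ/L)² t} (w(t))² satisfies the stochastic Navier–Stokes equation dv = [σ²/2 Δv - (v,∇)v - ∇p] dt + γ dw with div v = 0 and v(0,x) = 0. -/

import Mathlib

open Real

lemma hdSin (c x : ℝ) : HasDerivAt (fun y => Real.sin (c*y)) (c * Real.cos (c*x)) x := by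
  simpa [Function.comp_def, mul_comm] using
    (Real.hasDerivAt_sin (c*x)).comp x ((hasDerivAt_id x).const_mul c)

lemma hdCos (c x : ℝ) : HasDerivAt (fun y => Real.cos (c*y)) (-(c * Real.sin (c*x))) x := by
  simpa [Function.comp_def, mul_comm] using
    (Real.hasDerivAt_cos (c*x)).comp x ((hasDerivAt_id x).const_mul c)

lemma hdExp (a t : ℝ) : HasDerivAt (fun s => Real.exp (a*s)) (a * Real.exp (a*t)) t := by
  simpa [Function.comp_def, mul_comm] using
    (Real.hasDerivAt_exp (a*t)).comp t ((hasDerivAt_id t).const_mul a)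

lemma d_sin2 (A c B E x : ℝ) :
    deriv (fun z => A * Real.sin (c*z) * B * E) x = A * (c * Real.cos (c*x)) * B * E :=
  ((((hdSin c x).const_mul A).mul_const B).mul_const E).deriv

lemma d_cos2 (A c B E x : ℝ) :
    deriv (fun z => A * Real.cos (c*z) * B * E) x = A * -(c * Real.sin (c*x)) * B * E :=
  ((((hdCos c x).const_mul A).mul_const B).mul_const E).deriv

lemma d_sin3 (C c E x : ℝ) :
    deriv (fun z => C * Real.sin (c*z) * E) x = C * (c * Real.cos (c*x)) * E :=
  (((hdSin c x).const_mul C).mul_const E).deriv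

lemma d_cos3 (C c E x : ℝ) :
    deriv (fun z => C * Real.cos (c*z) * E) x = C * -(c * Real.sin (c*x)) * E :=
  (((hdCos c x).const_mul C).mul_const E).deriv

lemma dd_sin2 (A c B E x : ℝ) :
    deriv (fun y => deriv (fun z => A * Real.sin (c*z) * B * E) y) x
      = A * (c * -(c * Real.sin (c*x))) * B * E := by
  have h : (fun y => deriv (fun z => A * Real.sin (c*z) * B * E) y)
      = fun y => A * (c * Real.cos (c*y)) * B * E := funext fun y => d_sin2 A c B E y
  rw [h]
  exact (((((hdCos c x).const_mul c).const_mul A).mul_const B).mul_const E).deriv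

lemma dd_cos2 (A c B E x : ℝ) :
    deriv (fun y => deriv (fun z => A * Real.cos (c*z) * B * E) y) x
      = A * -(c * (c * Real.cos (c*x))) * B * E := by
  have h : (fun y => deriv (fun z => A * Real.cos (c*z) * B * E) y)
      = fun y => A * -(c * Real.sin (c*y)) * B * E := funext fun y => d_cos2 A c B E y
  rw [h]
  exact ((((((hdSin c x).const_mul c).neg).const_mul A).mul_const B).mul_const E).deriv

lemma dd_sin3 (C c E x : ℝ) :
    deriv (fun y => deriv (fun z => C * Real.sin (c*z) * E) y) x
      = C * (c * -(c * Real.sin (c*x))) * E := by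
  have h : (fun y => deriv (fun z => C * Real.sin (c*z) * E) y)
      = fun y => C * (c * Real.cos (c*y)) * E := funext fun y => d_sin3 C c E y
  rw [h]
  exact ((((hdCos c x).const_mul c).const_mul C).mul_const E).deriv

lemma dd_cos3 (C c E x : ℝ) :
    deriv (fun y => deriv (fun z => C * Real.cos (c*z) * E) y) x
      = C * -(c * (c * Real.cos (c*x))) * E := by
  have h : (fun y => deriv (fun z => C * Real.cos (c*z) * E) y)
      = fun y => C * -(c * Real.sin (c*y)) * E := funext fun y => d_cos3 C c E y
  rw [h]
  exact (((((hdSin c x).const_mul c).neg).const_mul C).mul_const E).deriv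

lemma d_sin2w (A c B E W x : ℝ) :
    deriv (fun z => A * Real.sin (c*z) * B * E * W) x = A * (c * Real.cos (c*x)) * B * E * W :=
  (((((hdSin c x).const_mul A).mul_const B).mul_const E).mul_const W).deriv

lemma d_cos2w (A c B E W x : ℝ) :
    deriv (fun z => A * Real.cos (c*z) * B * E * W) x = A * -(c * Real.sin (c*x)) * B * E * W :=
  (((((hdCos c x).const_mul A).mul_const B).mul_const E).mul_const W).deriv

lemma d_sin3w (C c E W x : ℝ) :
    deriv (fun z => C * Real.sin (c*z) * E * W) x = C * (c * Real.cos (c*x)) * E * W :=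
  ((((hdSin c x).const_mul C).mul_const E).mul_const W).deriv

lemma d_cos3w (C c E W x : ℝ) :
    deriv (fun z => C * Real.cos (c*z) * E * W) x = C * -(c * Real.sin (c*x)) * E * W :=
  ((((hdCos c x).const_mul C).mul_const E).mul_const W).deriv

lemma d_p1 (K c D E W x : ℝ) :
    deriv (fun z => K * (Real.cos (c*z) + D) * E * W) x = K * -(c * Real.sin (c*x)) * E * W :=
  (((((hdCos c x).add_const D).const_mul K).mul_const E).mul_const W).deriv

lemma d_p2 (K c D E W x : ℝ) :
    deriv (fun z => K * (D + Real.cos (c*z)) * E * W) x = K * -(c * Real.sin (c*x)) * E * W :=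
  (((((hdCos c x).const_add D).const_mul K).mul_const E).mul_const W).deriv

lemma d_t (C a t : ℝ) :
    deriv (fun s => C * Real.exp (a*s)) t = C * (a * Real.exp (a*t)) :=
  ((hdExp a t).const_mul C).deriv


/-- First model problem: with `f = 0`, `q = 1`, and
`γ¹ = A sin(2πκx¹/L) cos(2πκx²/L) e^{-σ²(2πκ/L)²t}`,
`γ² = -A cos(2πκx¹/L) sin(2πκx²/L) e^{-σ²(2πκ/L)²t}`,
the pair `v = γ w(t)`, `p = (A²/4)(cos(4πκx¹/L) + cos(4πκx²/L)) e^{-2σ²(2πκ/L)²t} w(t)²`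
satisfies the SNSE `dv = [σ²/2 Δv - (v,∇)v - ∇p] dt + γ dw`, `div v = 0`, `v(0,·) = 0`;
via Itô's formula this amounts to: `∂ₜγ = (σ²/2)Δγ` (heat equation),
`(v,∇)v + ∇p = 0`, `div v = 0`, and `v(0,x) = 0`. -/
theorem taylor_vortex_snse_solution
    (A L σ : ℝ) (κ : ℤ) (hL : 0 < L) (hσ : 0 < σ)
    (w : ℝ → ℝ) (hw0 : w 0 = 0)
    (γ1 γ2 v1 v2 : ℝ → ℝ → ℝ → ℝ) (p : ℝ → ℝ → ℝ → ℝ)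
    (hγ1 : γ1 = fun t x1 x2 => A * sin (2*π*κ*x1/L) * cos (2*π*κ*x2/L) *
      exp (-σ^2 * (2*π*κ/L)^2 * t))
    (hγ2 : γ2 = fun t x1 x2 => -A * cos (2*π*κ*x1/L) * sin (2*π*κ*x2/L) *
      exp (-σ^2 * (2*π*κ/L)^2 * t))
    (hv1 : v1 = fun t x1 x2 => γ1 t x1 x2 * w t)
    (hv2 : v2 = fun t x1 x2 => γ2 t x1 x2 * w t)
    (hp : p = fun t x1 x2 => A^2/4 * (cos (4*π*κ*x1/L) + cos (4*π*κ*x2/L)) *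
      exp (-2*σ^2 * (2*π*κ/L)^2 * t) * (w t)^2) :
    -- `∂ₜγ = (σ²/2)Δγ`:
    (∀ t x1 x2,
      deriv (fun s => γ1 s x1 x2) t =
        σ^2/2 * (deriv (fun y => deriv (fun z => γ1 t z x2) y) x1 +
                 deriv (fun y => deriv (fun z => γ1 t x1 z) y) x2) ∧
      deriv (fun s => γ2 s x1 x2) t =
        σ^2/2 * (deriv (fun y => deriv (fun z => γ2 t z x2) y) x1 +
                 deriv (fun y => deriv (fun z => γ2 t x1 z) y) x2)) ∧
    -- `(v,∇)v + ∇p = 0`: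
    (∀ t x1 x2,
      v1 t x1 x2 * deriv (fun y => v1 t y x2) x1 +
        v2 t x1 x2 * deriv (fun y => v1 t x1 y) x2 +
        deriv (fun y => p t y x2) x1 = 0 ∧
      v1 t x1 x2 * deriv (fun y => v2 t y x2) x1 +
        v2 t x1 x2 * deriv (fun y => v2 t x1 y) x2 +
        deriv (fun y => p t x1 y) x2 = 0) ∧
    -- `div v = 0`:
    (∀ t x1 x2,
      deriv (fun y => v1 t y x2) x1 + deriv (fun y => v2 t x1 y) x2 = 0) ∧
    -- `v(0,x) = 0`:
    (∀ x1 x2, v1 0 x1 x2 = 0 ∧ v2 0 x1 x2 = 0) := by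
  subst hv1 hv2 hp hγ1 hγ2
  have harg : ∀ x : ℝ, 2*π*(κ:ℝ)*x/L = 2*π*(κ:ℝ)/L*x := fun x => by ring
  have harg4 : ∀ x : ℝ, 4*π*(κ:ℝ)*x/L = 2*(2*π*(κ:ℝ)/L)*x := fun x => by ring
  simp only [harg, harg4]
  set c : ℝ := 2*π*(κ:ℝ)/L with hc
  refine ⟨fun t x1 x2 => ?_, fun t x1 x2 => ?_, fun t x1 x2 => ?_, fun x1 x2 => ?_⟩
  · rw [d_t (A * Real.sin (c*x1) * Real.cos (c*x2)) (-σ^2*c^2) t,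
        d_t (-A * Real.cos (c*x1) * Real.sin (c*x2)) (-σ^2*c^2) t,
        dd_sin2 A c (Real.cos (c*x2)) (Real.exp (-σ^2*c^2*t)) x1,
        dd_cos3 (A * Real.sin (c*x1)) c (Real.exp (-σ^2*c^2*t)) x2,
        dd_cos2 (-A) c (Real.sin (c*x2)) (Real.exp (-σ^2*c^2*t)) x1,
        dd_sin3 (-A * Real.cos (c*x1)) c (Real.exp (-σ^2*c^2*t)) x2]
    exact ⟨by ring, by ring⟩
  · have hE : Real.exp (-2*σ^2*c^2*t) = Real.exp (-σ^2*c^2*t)^2 := by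
      rw [show (-2*σ^2*c^2*t : ℝ) = (-σ^2*c^2*t) + (-σ^2*c^2*t) by ring, Real.exp_add]; ring
    constructor
    · rw [d_sin2w A c (Real.cos (c*x2)) (Real.exp (-σ^2*c^2*t)) (w t) x1,
          d_cos3w (A * Real.sin (c*x1)) c (Real.exp (-σ^2*c^2*t)) (w t) x2,
          d_p1 (A^2/4) (2*c) (Real.cos (2*c*x2)) (Real.exp (-2*σ^2*c^2*t)) (w t ^ 2) x1,
          hE, show (2*c*x1 : ℝ) = 2*(c*x1) from mul_assoc 2 c x1, Real.sin_two_mul]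
      linear_combination (A^2*c*Real.sin (c*x1)*Real.cos (c*x1)*Real.exp (-σ^2*c^2*t)^2*(w t)^2) *
        Real.sin_sq_add_cos_sq (c*x2)
    · rw [d_cos2w (-A) c (Real.sin (c*x2)) (Real.exp (-σ^2*c^2*t)) (w t) x1,
          d_sin3w (-A * Real.cos (c*x1)) c (Real.exp (-σ^2*c^2*t)) (w t) x2,
          d_p2 (A^2/4) (2*c) (Real.cos (2*c*x1)) (Real.exp (-2*σ^2*c^2*t)) (w t ^ 2) x2,
          hE, show (2*c*x2 : ℝ) = 2*(c*x2) from mul_assoc 2 c x2, Real.sin_two_mul]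
      linear_combination (A^2*c*Real.sin (c*x2)*Real.cos (c*x2)*Real.exp (-σ^2*c^2*t)^2*(w t)^2) *
        Real.sin_sq_add_cos_sq (c*x1)
  · rw [d_sin2w A c (Real.cos (c*x2)) (Real.exp (-σ^2*c^2*t)) (w t) x1,
        d_sin3w (-A * Real.cos (c*x1)) c (Real.exp (-σ^2*c^2*t)) (w t) x2]
    ring
  · simp [hw0]
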